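/- Let Γ be a simple graph on a finite vertex type V, let ⊤ denote the complete graph on V, and let ι : Conf_⊤(ℂ) → Conf_Γ(ℂ) be the (continuous) inclusion of configuration spaces. Then ι induces a surjection on fundamental groups: for every basepoint x ∈ Conf_⊤(ℂ) and every loop γ in Conf_Γ(ℂ) based at ι(x), there exists a loop γ' in Conf_⊤(ℂ) based at x such that the image loop ι ∘ γ' is path-homotopic to γ in Conf_Γ(ℂ). -/

import Mathlib

/-- The graphical configuration space `Conf_Γ(X)`: functions `x : V → X` such that
adjacent vertices of `Γ` are sent to distinct points, with the subspace topology
inherited from the product space `X^V`. -/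
abbrev GraphConf {V : Type*} (Γ : SimpleGraph V) (X : Type*) [TopologicalSpace X] : Type _ :=
  {x : V → X // ∀ v w : V, Γ.Adj v w → x v ≠ x w}

/-- The inclusion of the ordinary configuration space `Conf_⊤(X)` (for the complete graph)
into the graphical configuration space `Conf_Γ(X)`. -/
def confInclusion {V : Type*} (Γ : SimpleGraph V) (X : Type*) [TopologicalSpace X] :
    GraphConf (⊤ : SimpleGraph V) X → GraphConf Γ X :=
  fun x => ⟨x.1, fun v w h => x.2 v w (by simpa using h.ne)⟩

theorem confInclusion_continuous {V : Type*} (Γ : SimpleGraph V)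
    (X : Type*) [TopologicalSpace X] : Continuous (confInclusion Γ X) := by
  apply Continuous.subtype_mk
  exact continuous_subtype_val

open Set unitInterval Metric Module

private lemma polyApprox (φ : C(unitInterval, ℝ)) {ε : ℝ} (hε : 0 < ε) :
    ∃ p : Polynomial ℝ, ∀ s : unitInterval, |p.eval (s : ℝ) - φ s| < ε := by
  have hφ : φ ∈ closure ((polynomialFunctions unitInterval : Subalgebra ℝ C(unitInterval, ℝ)) :
      Set C(unitInterval, ℝ)) := by
    have h := polynomialFunctions_closure_eq_top'
    have : φ ∈ (polynomialFunctions unitInterval).topologicalClosure := by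
      rw [h]; trivial
    rw [← Subalgebra.topologicalClosure_coe]; exact this
  rcases Metric.mem_closure_iff.1 hφ ε hε with ⟨q, hq, hdist⟩
  rw [polynomialFunctions_coe] at hq
  rcases hq with ⟨p, rfl⟩
  refine ⟨p, fun s => ?_⟩
  have := ContinuousMap.dist_apply_le_dist (f := Polynomial.toContinuousMapOnAlgHom unitInterval p)
    (g := φ) s
  have h2 : dist ((Polynomial.toContinuousMapOnAlgHom unitInterval p) s) (φ s) < ε :=
    lt_of_le_of_lt this (dist_comm φ _ ▸ hdist)
  simpa [Polynomial.toContinuousMapOnAlgHom, Polynomial.toContinuousMapOn,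
    Polynomial.toContinuousMap, Real.dist_eq] using h2

private lemma polyContDiff (p : Polynomial ℝ) : ContDiff ℝ 1 fun s : ℝ => p.eval s := by
  induction p using Polynomial.induction_on' with
  | add p q hp hq => simpa [Polynomial.eval_add] using hp.add hq
  | monomial n a =>
      simpa [Polynomial.eval_monomial] using contDiff_const.mul (contDiff_id.pow n)

private lemma homotopic_of_map {X : Type*} [TopologicalSpace X] {a b : X} {p q : Path a b}
    (F : C(I × I, X))
    (h0 : ∀ s, F (0, s) = p s) (h1 : ∀ s, F (1, s) = q s)
    (ha : ∀ t, F (t, 0) = a) (hb : ∀ t, F (t, 1) = b) : p.Homotopic q := by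
  exact ⟨{ toContinuousMap := F
           map_zero_left := h0
           map_one_left := h1
           prop' := fun t s hs => by
             rcases hs with rfl | hs
             · exact (ha t).trans p.source.symm
             · rw [mem_singleton_iff] at hs; subst hs
               exact (hb t).trans p.target.symm }⟩


/-- The inclusion `ι : Conf_⊤(ℂ) → Conf_Γ(ℂ)` induces a surjection on fundamental groups:
every loop in `Conf_Γ(ℂ)` based at `ι(x)` is path-homotopic to the image of a loop in
`Conf_⊤(ℂ)` based at `x`. -/
theorem confInclusion_pi1_surjective
    {V : Type*} [Fintype V] (Γ : SimpleGraph V)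
    (x : GraphConf (⊤ : SimpleGraph V) ℂ)
    (γ : Path (confInclusion Γ ℂ x) (confInclusion Γ ℂ x)) :
    ∃ γ' : Path x x,
      (γ'.map (confInclusion_continuous Γ ℂ)).Homotopic γ := by
  classical
  set U : Set (V → ℂ) := {y | ∀ v w, Γ.Adj v w → y v ≠ y w} with hU
  have hUopen : IsOpen U := by
    have hrw : U = ⋂ p : V × V, {y : V → ℂ | Γ.Adj p.1 p.2 → y p.1 ≠ y p.2} := by
      ext y
      simp only [hU, mem_setOf_eq, mem_iInter]
      exact ⟨fun h p => h p.1 p.2, fun h v w => h (v, w)⟩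
    rw [hrw]
    refine isOpen_iInter_of_finite fun p => ?_
    by_cases hadj : Γ.Adj p.1 p.2
    · have : {y : V → ℂ | Γ.Adj p.1 p.2 → y p.1 ≠ y p.2}
          = {y : V → ℂ | y p.1 = y p.2}ᶜ := by
        ext y; simp [hadj]
      rw [this]
      exact (isClosed_eq (continuous_apply p.1) (continuous_apply p.2)).isOpen_compl
    · have : {y : V → ℂ | Γ.Adj p.1 p.2 → y p.1 ≠ y p.2} = univ := by
        ext y; simp [hadj]
      rw [this]; exact isOpen_univ
  set f : I → V → ℂ := fun s => (γ s).1 with hfdef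
  have hf : Continuous f := continuous_subtype_val.comp γ.continuous
  have hf0 : f 0 = x.1 := congrArg Subtype.val γ.source
  have hf1 : f 1 = x.1 := congrArg Subtype.val γ.target
  have hfU : ∀ s, f s ∈ U := fun s => (γ s).2
  -- thickening radius
  obtain ⟨ε, hε, hthick⟩ := (isCompact_range hf).exists_thickening_subset_open hUopen
    (range_subset_iff.2 hfU)
  have hball : ∀ (s : I) (y : V → ℂ), dist y (f s) < ε → y ∈ U := fun s y h =>
    hthick (Metric.mem_thickening_iff.2 ⟨f s, mem_range_self s, h⟩)
  -- polynomial approximation of each coordinate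
  have hre : ∀ v : V, ∃ p : Polynomial ℝ, ∀ s : I, |p.eval (s : ℝ) - (f s v).re| < ε / 16 :=
    fun v => polyApprox ⟨fun s => (f s v).re,
      Complex.continuous_re.comp ((continuous_apply v).comp hf)⟩ (by positivity)
  have him : ∀ v : V, ∃ p : Polynomial ℝ, ∀ s : I, |p.eval (s : ℝ) - (f s v).im| < ε / 16 :=
    fun v => polyApprox ⟨fun s => (f s v).im,
      Complex.continuous_im.comp ((continuous_apply v).comp hf)⟩ (by positivity)
  choose pre hpre using hre
  choose pim hpim using him
  set g : ℝ → V → ℂ := fun s v =>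
    (Complex.ofReal ((pre v).eval s)) + Complex.ofReal ((pim v).eval s) * Complex.I with hgdef
  have hgsm : ∀ v, ContDiff ℝ 1 fun s => g s v := fun v =>
    ((Complex.ofRealCLM.contDiff.comp (polyContDiff (pre v))).add
      ((Complex.ofRealCLM.contDiff.comp (polyContDiff (pim v))).mul contDiff_const))
  have hgf : ∀ (s : I) (v : V), ‖g (s : ℝ) v - f s v‖ < ε / 8 := by
    intro s v
    have h1 := hpre v s
    have h2 := hpim v s
    have hz : (g (s : ℝ) v - f s v).re = (pre v).eval (s : ℝ) - (f s v).re := by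
      simp [hgdef]
    have hz' : (g (s : ℝ) v - f s v).im = (pim v).eval (s : ℝ) - (f s v).im := by
      simp [hgdef]
    calc ‖g (s : ℝ) v - f s v‖ ≤ |(g (s : ℝ) v - f s v).re| + |(g (s : ℝ) v - f s v).im| := by
          exact Complex.norm_le_abs_re_add_abs_im _
      _ < ε / 16 + ε / 16 := by rw [hz, hz']; exact add_lt_add h1 h2
      _ = ε / 8 := by ring
  have hgcont : Continuous g := continuous_pi fun v => (hgsm v).continuous
  -- endpoint-corrected approximation
  set gt : ℝ → V → ℂ := fun s => g s + (1 - s) • (x.1 - g 0) + s • (x.1 - g 1) with hgtdef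
  have hgt0 : gt 0 = x.1 := by
    funext v; simp [hgtdef]
  have hgt1 : gt 1 = x.1 := by
    funext v; simp [hgtdef]
  have hgtv : ∀ (s : ℝ) (v : V),
      gt s v = g s v + (1 - s) • (x.1 v - g 0 v) + s • (x.1 v - g 1 v) := by
    intro s v; rfl
  have hgtsm : ∀ v, ContDiff ℝ 1 fun s => gt s v := by
    intro v
    simp only [hgtv]
    exact ((hgsm v).add (((contDiff_const.sub contDiff_id).smul contDiff_const))).add
      (contDiff_id.smul contDiff_const)
  have hgtcont : Continuous gt := continuous_pi fun v => (hgtsm v).continuous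
  -- error bound for gt on I
  have hpiclose : ∀ s : I, ‖g (s : ℝ) - f s‖ < ε / 8 := by
    intro s
    refine (pi_norm_lt_iff (by positivity)).2 fun v => ?_
    simpa using hgf s v
  have hgtf : ∀ s : I, ‖gt (s : ℝ) - f s‖ < ε / 2 := by
    intro s
    have h0' : ‖x.1 - g 0‖ < ε / 8 := by
      have := hpiclose 0
      rw [hf0] at this
      simpa [norm_sub_rev] using this
    have h1' : ‖x.1 - g 1‖ < ε / 8 := by
      have := hpiclose 1
      rw [hf1] at this
      simpa [norm_sub_rev] using this
    have hs0 : (0 : ℝ) ≤ (s : ℝ) := s.2.1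
    have hs1 : (s : ℝ) ≤ 1 := s.2.2
    have e1 : ‖(1 - (s : ℝ)) • (x.1 - g 0)‖ ≤ ‖x.1 - g 0‖ := by
      rw [norm_smul]
      have : ‖(1 - (s : ℝ))‖ ≤ 1 := by
        rw [Real.norm_eq_abs, abs_of_nonneg (by linarith)]; linarith
      nlinarith [norm_nonneg (x.1 - g 0)]
    have e2 : ‖(s : ℝ) • (x.1 - g 1)‖ ≤ ‖x.1 - g 1‖ := by
      rw [norm_smul]
      have : ‖(s : ℝ)‖ ≤ 1 := by rw [Real.norm_eq_abs, abs_of_nonneg hs0]; linarith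
      nlinarith [norm_nonneg (x.1 - g 1)]
    have : gt (s : ℝ) - f s = (g (s : ℝ) - f s) + (1 - (s : ℝ)) • (x.1 - g 0)
        + (s : ℝ) • (x.1 - g 1) := by
      simp [hgtdef]; abel
    rw [this]
    calc ‖(g (s : ℝ) - f s) + (1 - (s : ℝ)) • (x.1 - g 0) + (s : ℝ) • (x.1 - g 1)‖
        ≤ ‖(g (s : ℝ) - f s) + (1 - (s : ℝ)) • (x.1 - g 0)‖ + ‖(s : ℝ) • (x.1 - g 1)‖ :=
          norm_add_le _ _
      _ ≤ ‖g (s : ℝ) - f s‖ + ‖(1 - (s : ℝ)) • (x.1 - g 0)‖ + ‖(s : ℝ) • (x.1 - g 1)‖ := by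
          have := norm_add_le (g (s : ℝ) - f s) ((1 - (s : ℝ)) • (x.1 - g 0))
          linarith
      _ < ε / 2 := by
          have := hpiclose s
          linarith
  -- injective weights
  set c : V → ℂ := fun v => ((Fintype.equivFin V v : ℕ) : ℂ) with hcdef
  have hcinj : Function.Injective c := by
    intro v w hvw
    have : ((Fintype.equivFin V v : ℕ) : ℂ) = ((Fintype.equivFin V w : ℕ) : ℂ) := hvw
    have hn : (Fintype.equivFin V v : ℕ) = (Fintype.equivFin V w : ℕ) := Nat.cast_injective this
    exact (Fintype.equivFin V).injective (Fin.val_injective hn)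
  -- the bad set
  set h : V × V → ℝ → ℂ := fun p s =>
    -(gt s p.1 - gt s p.2) / (((s : ℂ) * (1 - (s : ℂ))) * (c p.1 - c p.2)) with hhdef
  set Z : Set ℂ := ⋃ p : V × V, h p '' Ioo (0 : ℝ) 1 with hZdef
  have hZdim : dimH Z ≤ 1 := by
    rw [hZdef, dimH_iUnion]
    refine iSup_le fun p => ?_
    have hcd : ContDiffOn ℝ 1 (h p) (Ioo (0 : ℝ) 1) := by
      by_cases hp : p.1 = p.2
      · have : h p = fun _ => 0 := by
          funext s; simp [hhdef, hp]
        rw [this]; exact contDiffOn_const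
      · have hnum : ContDiff ℝ 1 fun s : ℝ => -(gt s p.1 - gt s p.2) :=
          ((hgtsm p.1).sub (hgtsm p.2)).neg
        have hden : ContDiff ℝ 1 fun s : ℝ =>
            ((s : ℂ) * (1 - (s : ℂ))) * (c p.1 - c p.2) := by
          have hof : ContDiff ℝ 1 fun s : ℝ => (s : ℂ) := Complex.ofRealCLM.contDiff
          exact (hof.mul (contDiff_const.sub hof)).mul contDiff_const
        have hrw : h p = fun s : ℝ => -(gt s p.1 - gt s p.2) *
            (((s : ℂ) * (1 - (s : ℂ))) * (c p.1 - c p.2))⁻¹ :=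
          funext fun s => div_eq_mul_inv _ _
        rw [hrw]
        refine hnum.contDiffOn.mul (hden.contDiffOn.inv fun s hs => ?_)
        refine mul_ne_zero (mul_ne_zero ?_ ?_) ?_
        · exact_mod_cast ne_of_gt hs.1
        · rw [sub_ne_zero]
          exact_mod_cast (ne_of_lt hs.2).symm
        · rw [sub_ne_zero]
          exact fun hc => hp (hcinj hc)
    calc dimH (h p '' Ioo (0 : ℝ) 1) ≤ dimH (Ioo (0 : ℝ) 1) :=
          hcd.dimH_image_le (convex_Ioo _ _) Subset.rfl
      _ ≤ dimH (univ : Set ℝ) := dimH_mono (subset_univ _)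
      _ = 1 := Real.dimH_univ
  have hdense : Dense Zᶜ := by
    refine dense_compl_of_dimH_lt_finrank (lt_of_le_of_lt hZdim ?_)
    rw [Complex.finrank_real_complex]
    exact_mod_cast one_lt_two
  -- pick the small generic z
  have hcpos : (0 : ℝ) < ‖c‖ + 1 := by positivity
  set r : ℝ := ε / (2 * (‖c‖ + 1)) with hrdef
  have hr : 0 < r := by positivity
  obtain ⟨z, hzZ, hzball⟩ := hdense.exists_mem_open Metric.isOpen_ball
    (Metric.nonempty_ball.2 hr)
  have hznorm : ‖z‖ < r := mem_ball_zero_iff.1 hzball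
  -- the perturbed loop
  set γ₂ : ℝ → V → ℂ := fun s => gt s + ((((s * (1 - s) : ℝ) : ℂ)) * z) • c with hγ₂def
  have hγ₂cont : Continuous γ₂ := by
    refine hgtcont.add (Continuous.smul (f := fun s : ℝ => (((s * (1 - s) : ℝ) : ℂ)) * z)
      (g := fun _ : ℝ => c) ?_ continuous_const)
    exact ((Complex.continuous_ofReal.comp
      (continuous_id.mul (continuous_const.sub continuous_id))).mul continuous_const)
  have hγ₂0 : γ₂ 0 = x.1 := by
    simp [hγ₂def, hgt0]
  have hγ₂1 : γ₂ 1 = x.1 := by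
    simp [hγ₂def, hgt1]
  have hpert : ∀ s : I, ‖((((s : ℝ) * (1 - (s : ℝ)) : ℝ) : ℂ) * z) • c‖ < ε / 2 := by
    intro s
    rw [norm_smul, norm_mul]
    have hs0 : (0 : ℝ) ≤ (s : ℝ) := s.2.1
    have hs1 : (s : ℝ) ≤ 1 := s.2.2
    have h1 : ‖(((s : ℝ) * (1 - (s : ℝ)) : ℝ) : ℂ)‖ ≤ 1 := by
      rw [Complex.norm_real, Real.norm_eq_abs, abs_of_nonneg (by nlinarith)]
      nlinarith
    have h2 : ‖z‖ * ‖c‖ < ε / 2 := by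
      have : ‖z‖ * (‖c‖ + 1) < r * (‖c‖ + 1) := by
        exact mul_lt_mul_of_pos_right hznorm hcpos
      have hrc : r * (‖c‖ + 1) = ε / 2 := by
        rw [hrdef]; field_simp
      nlinarith [norm_nonneg z, norm_nonneg c]
    calc ‖(((s : ℝ) * (1 - (s : ℝ)) : ℝ) : ℂ)‖ * ‖z‖ * ‖c‖
        = ‖(((s : ℝ) * (1 - (s : ℝ)) : ℝ) : ℂ)‖ * (‖z‖ * ‖c‖) := by ring
      _ ≤ 1 * (‖z‖ * ‖c‖) := mul_le_mul_of_nonneg_right h1 (by positivity)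
      _ < ε / 2 := by rw [one_mul]; exact h2
  have hγ₂f : ∀ s : I, ‖γ₂ (s : ℝ) - f s‖ < ε := by
    intro s
    have : γ₂ (s : ℝ) - f s = (gt (s : ℝ) - f s)
        + ((((s : ℝ) * (1 - (s : ℝ)) : ℝ) : ℂ) * z) • c := by
      rw [hγ₂def]; funext v; simp only [Pi.add_apply, Pi.sub_apply, Pi.smul_apply, smul_eq_mul]; ring
    rw [this]
    calc ‖(gt (s : ℝ) - f s) + ((((s : ℝ) * (1 - (s : ℝ)) : ℝ) : ℂ) * z) • c‖
        ≤ ‖gt (s : ℝ) - f s‖ + ‖((((s : ℝ) * (1 - (s : ℝ)) : ℝ) : ℂ) * z) • c‖ := norm_add_le _ _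
      _ < ε / 2 + ε / 2 := add_lt_add (hgtf s) (hpert s)
      _ = ε := by ring
  have hγ₂U : ∀ s : I, γ₂ (s : ℝ) ∈ U := fun s =>
    hball s _ (by rw [dist_eq_norm]; exact hγ₂f s)
  -- all coordinates distinct
  have hγ₂dist : ∀ (s : I) (v w : V), v ≠ w → γ₂ (s : ℝ) v ≠ γ₂ (s : ℝ) w := by
    intro s v w hvw heq
    rcases eq_or_lt_of_le s.2.1 with hs0 | hs0
    · have hc0 : (s : ℝ) = 0 := hs0.symm
      have : γ₂ (s : ℝ) = x.1 := by rw [hc0, hγ₂0]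
      rw [this] at heq
      exact x.2 v w (by simpa using hvw) heq
    rcases eq_or_lt_of_le s.2.2 with hs1 | hs1
    · have : γ₂ (s : ℝ) = x.1 := by rw [hs1, hγ₂1]
      rw [this] at heq
      exact x.2 v w (by simpa using hvw) heq
    -- interior case: z would be a bad value
    have hveq : γ₂ (s : ℝ) v = gt (s : ℝ) v + ((((s : ℝ) * (1 - (s : ℝ)) : ℝ) : ℂ) * z) * c v := rfl
    have hweq : γ₂ (s : ℝ) w = gt (s : ℝ) w + ((((s : ℝ) * (1 - (s : ℝ)) : ℝ) : ℂ) * z) * c w := rfl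
    have hden : ((s : ℝ) : ℂ) * (1 - ((s : ℝ) : ℂ)) * (c v - c w) ≠ 0 := by
      refine mul_ne_zero (mul_ne_zero ?_ ?_) ?_
      · exact_mod_cast ne_of_gt hs0
      · rw [sub_ne_zero]
        exact_mod_cast (ne_of_lt hs1).symm
      · rw [sub_ne_zero]
        exact fun hc => hvw (hcinj hc)
    have hzbad : z = h (v, w) (s : ℝ) := by
      rw [hhdef]
      rw [eq_div_iff hden]
      rw [hveq, hweq] at heq
      have hcast : (((s : ℝ) * (1 - (s : ℝ)) : ℝ) : ℂ) = ((s : ℝ) : ℂ) * (1 - ((s : ℝ) : ℂ)) := by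
        push_cast; ring
      rw [hcast] at heq
      linear_combination heq
    exact hzZ (by
      rw [hZdef]
      exact mem_iUnion.2 ⟨(v, w), ⟨(s : ℝ), ⟨hs0, hs1⟩, hzbad.symm⟩⟩)
  -- the loop in the full configuration space
  have hγ₂top : ∀ (s : I) (v w : V), (⊤ : SimpleGraph V).Adj v w →
      γ₂ (s : ℝ) v ≠ γ₂ (s : ℝ) w :=
    fun s v w hvw => hγ₂dist s v w hvw.ne
  set γ' : Path x x :=
    { toFun := fun s => ⟨γ₂ (s : ℝ), fun v w hvw => hγ₂top s v w hvw⟩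
      continuous_toFun := ((hγ₂cont.comp continuous_subtype_val).subtype_mk _)
      source' := Subtype.ext (by simpa using hγ₂0)
      target' := Subtype.ext (by simpa using hγ₂1) } with hγ'def
  refine ⟨γ', ?_⟩
  -- straight-line homotopy from the mapped loop to γ
  have hFU : ∀ t s : I, f s + (1 - (t : ℝ)) • (γ₂ (s : ℝ) - f s) ∈ U := by
    intro t s
    refine hball s _ ?_
    rw [dist_eq_norm]
    have heq2 : f s + (1 - (t : ℝ)) • (γ₂ (s : ℝ) - f s) - f s
        = (1 - (t : ℝ)) • (γ₂ (s : ℝ) - f s) := by abel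
    rw [heq2, norm_smul]
    have ht0 : (0 : ℝ) ≤ (t : ℝ) := t.2.1
    have ht1 : (t : ℝ) ≤ 1 := t.2.2
    have h1 : ‖(1 - (t : ℝ))‖ ≤ 1 := by
      rw [Real.norm_eq_abs, abs_of_nonneg (by linarith)]; linarith
    calc ‖(1 - (t : ℝ))‖ * ‖γ₂ (s : ℝ) - f s‖ ≤ 1 * ‖γ₂ (s : ℝ) - f s‖ :=
          mul_le_mul_of_nonneg_right h1 (norm_nonneg _)
      _ < ε := by rw [one_mul]; exact hγ₂f s
  set F : C(I × I, GraphConf Γ ℂ) :=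
    ⟨fun q => ⟨f q.2 + (1 - (q.1 : ℝ)) • (γ₂ ((q.2 : ℝ)) - f q.2), hFU q.1 q.2⟩, by
      refine Continuous.subtype_mk ?_ _
      refine ((hf.comp continuous_snd).add (Continuous.smul (f := fun q : I × I => (1 - (q.1 : ℝ)))
        (g := fun q : I × I => γ₂ ((q.2 : ℝ)) - f q.2) ?_ ?_))
      · exact continuous_const.sub (continuous_subtype_val.comp continuous_fst)
      · exact (hγ₂cont.comp (continuous_subtype_val.comp continuous_snd)).sub
          (hf.comp continuous_snd)⟩ with hFdef
  refine homotopic_of_map F ?_ ?_ ?_ ?_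
  · intro s
    refine Subtype.ext ?_
    have hl : (F (0, s)).1 = γ₂ (s : ℝ) := by
      simp [hFdef]
    have hr2 : ((γ'.map (confInclusion_continuous Γ ℂ)) s).1 = γ₂ (s : ℝ) := by
      rfl
    rw [hl, hr2]
  · intro s
    refine Subtype.ext ?_
    simp [hFdef, hfdef]
  · intro t
    refine Subtype.ext ?_
    show f 0 + (1 - (t : ℝ)) • (γ₂ ((0 : I) : ℝ) - f 0) = x.1
    have hc0 : ((0 : I) : ℝ) = 0 := rfl
    rw [hc0, hf0, hγ₂0, sub_self, smul_zero, add_zero]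
  · intro t
    refine Subtype.ext ?_
    show f 1 + (1 - (t : ℝ)) • (γ₂ ((1 : I) : ℝ) - f 1) = x.1
    have hc1 : ((1 : I) : ℝ) = 1 := rfl
    rw [hc1, hf1, hγ₂1, sub_self, smul_zero, add_zero]
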